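/- Let μ > 0, n ∈ ℕ, and 0 ≤ k ≤ n. Then the integral I_{n,k} := (n+1) ∫₀¹ p_{n,k}(a_{n+1}(x)) dx satisfies I_{n,k} ≤ 1 + 1/((n+1)(1+μ)). -/

import Mathlib

open MeasureTheory Filter Set
open Nat

/-- The logarithmic weight `ln_μ(x) = ln(1+μ+x)`. -/
noncomputable def lnMu (μ x : ℝ) : ℝ := Real.log (1 + μ + x)

/-- The function `a_{n+1}(x)` from the paper. -/
noncomputable def aFun (μ : ℝ) (n : ℕ) (x : ℝ) : ℝ :=
  Real.log (1 + x / (((n : ℝ) + 1) * (1 + μ))) /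
    Real.log (1 + 1 / (((n : ℝ) + 1) * (1 + μ)))

/-- Bernstein basis polynomial `p_{n,k}(x) = C(n,k) x^k (1-x)^{n-k}`. -/
noncomputable def bern (n k : ℕ) (x : ℝ) : ℝ :=
  (n.choose k : ℝ) * x ^ k * (1 - x) ^ (n - k)

/-- The Kantorovich logarithmic operator `𝓛ₙᴷ(f,x)`. -/
noncomputable def LK (μ : ℝ) (n : ℕ) (f : ℝ → ℝ) (x : ℝ) : ℝ :=
  lnMu μ x * ∑ k ∈ Finset.range (n + 1),
    bern n k (aFun μ n x) * ((n : ℝ) + 1) *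
      ∫ t in ((k : ℝ) / ((n : ℝ) + 1))..(((k : ℝ) + 1) / ((n : ℝ) + 1)), f t / lnMu μ t

/-- `γ_n := max_{x ∈ [0,1]} |a_{n+1}(x) - x|`. -/
noncomputable def gammaN (μ : ℝ) (n : ℕ) : ℝ :=
  ⨆ x : Set.Icc (0 : ℝ) 1, |aFun μ n (x : ℝ) - (x : ℝ)|

/-- Unweighted L^p norm `(∫₀¹ |f|^p)^(1/p)` on [0,1]. -/
noncomputable def normP (p : ℝ) (f : ℝ → ℝ) : ℝ :=
  (∫ x in (0:ℝ)..1, |f x| ^ p) ^ (1 / p)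

/-- Weighted L^p norm `(∫₀¹ |f/ln_μ|^p)^(1/p)` on [0,1]. -/
noncomputable def normPMu (μ p : ℝ) (f : ℝ → ℝ) : ℝ :=
  (∫ x in (0:ℝ)..1, |f x / lnMu μ x| ^ p) ^ (1 / p)



-- nat factorial product identity
lemma fact_prod (k m : ℕ) : k ! * ∏ j ∈ Finset.range m, (k + 1 + j) = (k + m)! := by
  induction m with
  | zero => simp
  | succ m ih =>
    rw [Finset.prod_range_succ, ← mul_assoc, ih]
    rw [show k + (m + 1) = (k + m) + 1 by ring, Nat.factorial_succ]
    ring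

lemma integral_pow_mul_one_sub_pow (k m : ℕ) :
    ∫ x in (0:ℝ)..1, x ^ k * (1 - x) ^ m = (k ! * m ! : ℝ) / (k + m + 1)! := by
  have hb := Complex.betaIntegral_eval_nat_add_one_right
    (u := (k : ℂ) + 1) (by simp; positivity) m
  rw [Complex.betaIntegral] at hb
  have h1 : ∀ x : ℝ, ((x:ℂ)) ^ ((k:ℂ) + 1 - 1) * (1 - (x:ℂ)) ^ ((m:ℂ) + 1 - 1)
      = ((x ^ k * (1 - x) ^ m : ℝ) : ℂ) := by
    intro x
    push_cast
    rw [add_sub_cancel_right, add_sub_cancel_right, Complex.cpow_natCast,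
      Complex.cpow_natCast]
  simp only [h1] at hb
  rw [intervalIntegral.integral_ofReal] at hb
  have h2 : ∏ j ∈ Finset.range (m + 1), ((k:ℂ) + 1 + j)
      = ((k + m + 1)! : ℂ) / (k ! : ℂ) := by
    have := fact_prod k (m + 1)
    rw [eq_div_iff (by exact_mod_cast (Nat.factorial_pos k).ne')]
    rw [show ((k+m+1)! : ℂ) = (((k + (m+1))! : ℕ) : ℂ) by norm_num [show k+m+1 = k+(m+1) by ring]]
    rw [← this]
    push_cast
    ring
  rw [h2] at hb
  have hk0 : (k ! : ℂ) ≠ 0 := by exact_mod_cast (Nat.factorial_pos k).ne'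
  have hkm0 : ((k + m + 1)! : ℂ) ≠ 0 := by exact_mod_cast (Nat.factorial_pos _).ne'
  rw [div_div_eq_mul_div] at hb
  have : ((∫ x in (0:ℝ)..1, x ^ k * (1 - x) ^ m : ℝ) : ℂ)
      = ((k ! * m ! : ℝ) / ((k + m + 1)! : ℝ) : ℂ) := by
    rw [hb]; push_cast; ring
  exact_mod_cast this


lemma integral_bern (n k : ℕ) (hk : k ≤ n) :
    ∫ x in (0:ℝ)..1, bern n k x = 1 / ((n : ℝ) + 1) := by
  unfold bern
  simp only [mul_assoc]
  rw [intervalIntegral.integral_const_mul, integral_pow_mul_one_sub_pow]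
  have h1 : k + (n - k) + 1 = n + 1 := by omega
  have h2 : (n.choose k * (k ! * (n-k)!) : ℕ) = n ! := by
    have := Nat.choose_mul_factorial_mul_factorial hk
    rw [← this]; ring
  rw [h1, Nat.factorial_succ]
  have hne : ((n + 1) * n ! : ℝ) ≠ 0 := by positivity
  field_simp
  push_cast [← h2]
  ring


theorem stmt9 (μ : ℝ) (hμ : 0 < μ) (n k : ℕ) (hk : k ≤ n) :
    ((n : ℝ) + 1) * ∫ x in (0:ℝ)..1, bern n k (aFun μ n x) ≤
      1 + 1 / (((n : ℝ) + 1) * (1 + μ)) := by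
  set c : ℝ := ((n : ℝ) + 1) * (1 + μ) with hc_def
  have hc : 0 < c := by positivity
  set b : ℝ := 1 + 1 / c with hb_def
  have hb1 : 1 < b := by simp [hb_def]; positivity
  have hb0 : 0 < b := by linarith
  set L : ℝ := Real.log b with hL_def
  have hL : 0 < L := Real.log_pos hb1
  set ψ : ℝ → ℝ := fun u => c * (Real.exp (u * L) - 1) with hψ_def
  have hcont_bern : Continuous (bern n k) := by
    unfold bern; continuity
  -- derivative of ψ
  have hder : ∀ u : ℝ, HasDerivAt ψ (c * (Real.exp (u * L) * L)) u := by
    intro u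
    simpa using (((hasDerivAt_id u).mul_const L).exp.sub_const 1).const_mul c
  -- a ∘ ψ = id
  have hkey : ∀ u : ℝ, aFun μ n (ψ u) = u := by
    intro u
    unfold aFun
    rw [← hc_def, ← hb_def, ← hL_def]
    have : 1 + ψ u / c = Real.exp (u * L) := by
      field_simp [hψ_def]
      simp only [hψ_def]; ring
    rw [this, Real.log_exp]
    field_simp
  have hψ0 : ψ 0 = 0 := by simp [hψ_def]
  have hψ1 : ψ 1 = 1 := by
    have : Real.exp L = b := Real.exp_log hb0
    simp only [hψ_def, one_mul, this, hb_def]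
    field_simp
    ring
  -- ψ maps [0,1] into nonneg reals
  have hψnn : ∀ u ∈ uIcc (0:ℝ) 1, 0 ≤ ψ u := by
    intro u hu
    rw [uIcc_of_le zero_le_one] at hu
    have : (1:ℝ) ≤ Real.exp (u * L) := by
      rw [← Real.exp_zero]
      exact Real.exp_le_exp.mpr (by nlinarith [hu.1])
    simp only [hψ_def]
    nlinarith
  -- continuity of g on nonneg reals
  have hg : ContinuousOn (fun x => bern n k (aFun μ n x)) (Ici (0:ℝ)) := by
    apply hcont_bern.comp_continuousOn
    unfold aFun
    apply ContinuousOn.div_const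
    apply ContinuousOn.log
    · fun_prop
    · intro x hx
      simp only [mem_Ici] at hx
      have : 0 ≤ x / c := by positivity
      nlinarith
  -- substitution
  have hsub : (∫ x in (0:ℝ)..1, bern n k (aFun μ n x))
      = ∫ u in (0:ℝ)..1, bern n k u * (c * (Real.exp (u * L) * L)) := by
    have := intervalIntegral.integral_comp_mul_deriv'
      (f := ψ) (f' := fun u => c * (Real.exp (u * L) * L))
      (g := fun x => bern n k (aFun μ n x)) (a := 0) (b := 1)
      (fun u _ => hder u) (by fun_prop)
      (hg.mono (by
        rintro x ⟨u, hu, rfl⟩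
        exact hψnn u hu))
    rw [hψ0, hψ1] at this
    rw [← this]
    apply intervalIntegral.integral_congr
    intro u _
    simp only [Function.comp_apply, hkey u]
  rw [hsub]
  -- bound the integral
  have hmono : (∫ u in (0:ℝ)..1, bern n k u * (c * (Real.exp (u * L) * L)))
      ≤ ∫ u in (0:ℝ)..1, bern n k u * (c * (b * L)) := by
    apply intervalIntegral.integral_mono_on zero_le_one
    · apply Continuous.intervalIntegrable; fun_prop
    · apply Continuous.intervalIntegrable; fun_prop
    · intro u hu
      have hbpos : 0 ≤ bern n k u := by
        unfold bern
        have h1 : (0:ℝ) ≤ u := hu.1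
        have h2 : u ≤ 1 := hu.2
        have : (0:ℝ) ≤ 1 - u := by linarith
        positivity
      have he : Real.exp (u * L) ≤ b := by
        rw [← Real.exp_log hb0]
        exact Real.exp_le_exp.mpr (by nlinarith [hu.2])
      have : c * (Real.exp (u * L) * L) ≤ c * (b * L) := by
        apply mul_le_mul_of_nonneg_left _ hc.le
        exact mul_le_mul_of_nonneg_right he hL.le
      exact mul_le_mul_of_nonneg_left this hbpos
  have hint : (∫ u in (0:ℝ)..1, bern n k u * (c * (b * L)))
      = (c * (b * L)) / ((n:ℝ) + 1) := by
    rw [intervalIntegral.integral_mul_const, integral_bern n k hk]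
    ring
  have hcL : c * L ≤ 1 := by
    have := Real.log_le_sub_one_of_pos hb0
    have hb' : b - 1 = 1 / c := by rw [hb_def]; ring
    rw [hb'] at this
    calc c * L ≤ c * (1/c) := by nlinarith [hc]
    _ = 1 := by field_simp
  have hn1 : (0:ℝ) < (n:ℝ) + 1 := by positivity
  calc ((n : ℝ) + 1) * ∫ u in (0:ℝ)..1, bern n k u * (c * (Real.exp (u * L) * L))
      ≤ ((n : ℝ) + 1) * ((c * (b * L)) / ((n:ℝ) + 1)) := by
        rw [← hint]; exact mul_le_mul_of_nonneg_left hmono hn1.le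
    _ = (c * L) * b := by field_simp
    _ ≤ 1 * b := mul_le_mul_of_nonneg_right hcL hb0.le
    _ = 1 + 1 / c := by rw [one_mul, hb_def]
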